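/- Let C be a small category, α a cardinal, and Set_α the full subcategory of Set on sets of cardinality < α. Define presheaves 𝒱_α(c) = Fun(C/c, Set_αᵒᵖ) and 𝒱̇_α(c) = Fun(C/c, Set∙,αᵒᵖ), with the forgetful map 𝒱̇_α → 𝒱_α. Then for every α-small morphism of presheaves f : Y ⟶ X there is a pullback square in presheaves on C with left map f, right map 𝒱̇_α → 𝒱_α, bottom map X → 𝒱_α sending x ∈ X(c) to the functor (g : d → c) ↦ f_d⁻¹{X(g)(x)}, and top map Y → 𝒱̇_α sending y ∈ Y(c) to the functor (g : d → c) ↦ (f_d⁻¹{X(g)(f_c(y))}, Y(g)(y)). -/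

import Mathlib

open CategoryTheory Opposite Limits

universe u

namespace HS

variable {C : Type u} [SmallCategory C]

/-- The full subcategory `Set_α` of `Set` on the `α`-small sets (cardinality `< α`). -/
def SmallSet (α : Cardinal.{u}) : Type (u + 1) :=
  ObjectProperty.FullSubcategory (fun S : Type u => Cardinal.mk S < α)

instance (α : Cardinal.{u}) : Category.{u} (SmallSet α) :=
  ObjectProperty.FullSubcategory.category _

/-- The category `Set∙,α` of `α`-small pointed sets. -/
def SmallPointed (α : Cardinal.{u}) : Type (u + 1) :=
  ObjectProperty.FullSubcategory (fun P : Pointed.{u} => Cardinal.mk P.X < α)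

instance (α : Cardinal.{u}) : Category.{u} (SmallPointed α) :=
  ObjectProperty.FullSubcategory.category _

/-- The forgetful functor `Set∙,α ⥤ Set_α`. -/
def smallForget (α : Cardinal.{u}) : SmallPointed α ⥤ SmallSet α where
  obj P := ⟨P.obj.X, P.property⟩
  map f := ObjectProperty.homMk (TypeCat.ofHom f.hom.toFun)

/-- The nerve presheaf `c ↦ Fun(C/c, A)` of a (possibly large) category `A`. -/
def nerveObj (C : Type u) [SmallCategory C] (A : Type (u + 1)) [Category.{u} A] :
    Cᵒᵖ ⥤ Type (u + 1) where
  obj c := Over c.unop ⥤ A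
  map h := TypeCat.ofHom fun P => Over.map h.unop ⋙ P
  map_id c := by
    ext P
    show Over.map (𝟙 c.unop) ⋙ P = P
    rw [Over.mapId_eq]
    rfl
  map_comp h k := by
    ext P
    show Over.map (k.unop ≫ h.unop) ⋙ P = _
    rw [Over.mapComp_eq]
    rfl

/-- The universe `𝒱_α` of `α`-small families: `𝒱_α(c) = Fun(C/c, Set_αᵒᵖ)`. -/
def V (C : Type u) [SmallCategory C] (α : Cardinal.{u}) : Cᵒᵖ ⥤ Type (u + 1) :=
  nerveObj C (SmallSet α)ᵒᵖ

/-- The pointed universe `𝒱̇_α`: `𝒱̇_α(c) = Fun(C/c, Set∙,αᵒᵖ)`. -/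
def Vdot (C : Type u) [SmallCategory C] (α : Cardinal.{u}) : Cᵒᵖ ⥤ Type (u + 1) :=
  nerveObj C (SmallPointed α)ᵒᵖ

/-- The forgetful map of presheaves `𝒱̇_α ⟶ 𝒱_α`, by postcomposition with the
(opposite of the) forgetful functor `Set∙,α ⥤ Set_α`. -/
def VdotToV (C : Type u) [SmallCategory C] (α : Cardinal.{u}) : Vdot C α ⟶ V C α where
  app c := TypeCat.ofHom fun P => P ⋙ (smallForget α).op

/-- A map of presheaves is `α`-small if all of its fibers have cardinality `< α`. -/
def AlphaSmall {Y X : Cᵒᵖ ⥤ Type u} (α : Cardinal.{u}) (f : Y ⟶ X) : Prop :=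
  ∀ (c : Cᵒᵖ) (x : X.obj c), Cardinal.mk {y : Y.obj c // f.app c y = x} < α

/-- The fiber of a map of presheaves `f : Y ⟶ X` over an element `x ∈ X(d)`. -/
def fib {Y X : Cᵒᵖ ⥤ Type u} (f : Y ⟶ X) {d : C} (x : X.obj (op d)) : Type u :=
  {y : Y.obj (op d) // f.app (op d) y = x}

lemma fib_map {Y X : Cᵒᵖ ⥤ Type u} (f : Y ⟶ X) {d d' : C} (m : d ⟶ d')
    {x : X.obj (op d')} (y : fib f x) : f.app (op d) (Y.map m.op y.1) = X.map m.op x := by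
  rw [FunctorToTypes.naturality, y.2]

variable {Y X : Cᵒᵖ ⥤ Type u} {α : Cardinal.{u}} (f : Y ⟶ X) (hf : AlphaSmall α f)

/-- The classifying functor `C/c ⥤ Set_αᵒᵖ` of an `α`-small map `f : Y ⟶ X` at an element
`x ∈ X(c)`, sending `(g : d ⟶ c)` to the fiber `f_d⁻¹{X(g)(x)}`. -/
def classifySmall {c : C} (x : X.obj (op c)) : Over c ⥤ (SmallSet α)ᵒᵖ where
  obj g := op ⟨fib f (X.map g.hom.op x), hf _ _⟩
  map {g g'} m :=
    Quiver.Hom.op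
      (show (⟨fib f (X.map g'.hom.op x), _⟩ : SmallSet α) ⟶ ⟨fib f (X.map g.hom.op x), _⟩ from
        ObjectProperty.homMk <| TypeCat.ofHom fun y => ⟨Y.map m.left.op y.1, by
          change f.app (op g.left) (Y.map m.left.op y.1) = X.map g.hom.op x
          rw [fib_map f m.left y, ← types_comp_apply (X.map g'.hom.op) (X.map m.left.op),
            ← X.map_comp, ← op_comp, Over.w m]⟩)
  map_id g := by
    apply Quiver.Hom.unop_inj
    apply ObjectProperty.hom_ext
    ext y
    apply Subtype.ext
    change Y.map (𝟙 g.left).op y.1 = y.1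
    rw [op_id, Y.map_id]
    rfl
  map_comp {g g' g''} m m' := by
    apply Quiver.Hom.unop_inj
    apply ObjectProperty.hom_ext
    ext y
    apply Subtype.ext
    change Y.map (m.left ≫ m'.left).op y.1 = Y.map m.left.op (Y.map m'.left.op y.1)
    rw [op_comp, Y.map_comp]
    rfl

/-- The pointed classifying functor `C/c ⥤ Set∙,αᵒᵖ` of an `α`-small map `f : Y ⟶ X` at an
element `y ∈ Y(c)`, sending `(g : d ⟶ c)` to `(f_d⁻¹{X(g)(f_c(y))}, Y(g)(y))`. -/
def classifyDotSmall {c : C} (y : Y.obj (op c)) : Over c ⥤ (SmallPointed α)ᵒᵖ where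
  obj g := op ⟨⟨fib f (X.map g.hom.op (f.app (op c) y)),
    ⟨Y.map g.hom.op y, by rw [FunctorToTypes.naturality]⟩⟩, hf _ _⟩
  map {g g'} m :=
    Quiver.Hom.op
      (show (⟨⟨fib f (X.map g'.hom.op (f.app (op c) y)), _⟩, _⟩ : SmallPointed α) ⟶
          ⟨⟨fib f (X.map g.hom.op (f.app (op c) y)), _⟩, _⟩ from
        ObjectProperty.homMk ⟨fun z => ⟨Y.map m.left.op z.1, by
            change f.app (op g.left) (Y.map m.left.op z.1) = X.map g.hom.op (f.app (op c) y)
            rw [fib_map f m.left z, ← types_comp_apply (X.map g'.hom.op) (X.map m.left.op),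
              ← X.map_comp, ← op_comp, Over.w m]⟩, by
          apply Subtype.ext
          change Y.map m.left.op (Y.map g'.hom.op y) = Y.map g.hom.op y
          rw [← types_comp_apply (Y.map g'.hom.op) (Y.map m.left.op), ← Y.map_comp,
            ← op_comp, Over.w m]⟩)
  map_id g := by
    apply Quiver.Hom.unop_inj
    apply ObjectProperty.hom_ext
    apply Pointed.Hom.ext
    funext z
    apply Subtype.ext
    change Y.map (𝟙 g.left).op z.1 = z.1
    rw [op_id, Y.map_id]
    rfl
  map_comp {g g' g''} m m' := by
    apply Quiver.Hom.unop_inj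
    apply ObjectProperty.hom_ext
    apply Pointed.Hom.ext
    funext z
    apply Subtype.ext
    change Y.map (m.left ≫ m'.left).op z.1 = Y.map m.left.op (Y.map m'.left.op z.1)
    rw [op_comp, Y.map_comp]
    rfl

section Aux

variable {C : Type u} [SmallCategory C] {Y X : Cᵒᵖ ⥤ Type u} {α : Cardinal.{u}}
variable (f : Y ⟶ X)

/-- Generic classifying functor into `Set_αᵒᵖ` determined by a family of base points. -/
def classifyAux {c : C} (ξ : ∀ g : Over c, X.obj (op g.left))
    (hsm : ∀ g, Cardinal.mk (fib f (ξ g)) < α)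
    (hnat : ∀ {g g' : Over c} (m : g ⟶ g'), X.map m.left.op (ξ g') = ξ g) :
    Over c ⥤ (SmallSet α)ᵒᵖ where
  obj g := op ⟨fib f (ξ g), hsm g⟩
  map {g g'} m :=
    Quiver.Hom.op
      (show (⟨fib f (ξ g'), hsm g'⟩ : SmallSet α) ⟶ ⟨fib f (ξ g), hsm g⟩ from
        ObjectProperty.homMk <| TypeCat.ofHom fun z => ⟨Y.map m.left.op z.1, by rw [fib_map f m.left z, hnat m]⟩)
  map_id g := by
    apply Quiver.Hom.unop_inj
    apply ObjectProperty.hom_ext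
    ext z
    apply Subtype.ext
    change Y.map (𝟙 g.left).op z.1 = z.1
    rw [op_id, Y.map_id]
    rfl
  map_comp {g g' g''} m m' := by
    apply Quiver.Hom.unop_inj
    apply ObjectProperty.hom_ext
    ext z
    apply Subtype.ext
    change Y.map (m.left ≫ m'.left).op z.1 = Y.map m.left.op (Y.map m'.left.op z.1)
    rw [op_comp, Y.map_comp]
    rfl

lemma classifyAux_congr {c : C} {ξ ξ' : ∀ g : Over c, X.obj (op g.left)}
    (h : ∀ g, ξ g = ξ' g) {h1 : ∀ g, Cardinal.mk (fib f (ξ g)) < α}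
    {h2 : ∀ {g g' : Over c} (m : g ⟶ g'), X.map m.left.op (ξ g') = ξ g}
    {h1' : ∀ g, Cardinal.mk (fib f (ξ' g)) < α}
    {h2' : ∀ {g g' : Over c} (m : g ⟶ g'), X.map m.left.op (ξ' g') = ξ' g} :
    classifyAux f ξ h1 h2 = classifyAux f ξ' h1' h2' := by
  obtain rfl : ξ = ξ' := funext h
  rfl

/-- Generic pointed classifying functor. -/
def classifyDotAux {c : C} (ξ : ∀ g : Over c, X.obj (op g.left)) (pt : ∀ g, fib f (ξ g))
    (hsm : ∀ g, Cardinal.mk (fib f (ξ g)) < α)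
    (hnat : ∀ {g g' : Over c} (m : g ⟶ g'), X.map m.left.op (ξ g') = ξ g)
    (hpt : ∀ {g g' : Over c} (m : g ⟶ g'), Y.map m.left.op (pt g').1 = (pt g).1) :
    Over c ⥤ (SmallPointed α)ᵒᵖ where
  obj g := op ⟨⟨fib f (ξ g), pt g⟩, hsm g⟩
  map {g g'} m :=
    Quiver.Hom.op
      (show (⟨⟨fib f (ξ g'), pt g'⟩, hsm g'⟩ : SmallPointed α) ⟶ ⟨⟨fib f (ξ g), pt g⟩, hsm g⟩ from
        ObjectProperty.homMk ⟨fun z => ⟨Y.map m.left.op z.1, by rw [fib_map f m.left z, hnat m]⟩,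
          Subtype.ext (hpt m)⟩)
  map_id g := by
    apply Quiver.Hom.unop_inj
    apply ObjectProperty.hom_ext
    apply Pointed.Hom.ext
    funext z
    apply Subtype.ext
    change Y.map (𝟙 g.left).op z.1 = z.1
    rw [op_id, Y.map_id]
    rfl
  map_comp {g g' g''} m m' := by
    apply Quiver.Hom.unop_inj
    apply ObjectProperty.hom_ext
    apply Pointed.Hom.ext
    funext z
    apply Subtype.ext
    change Y.map (m.left ≫ m'.left).op z.1 = Y.map m.left.op (Y.map m'.left.op z.1)
    rw [op_comp, Y.map_comp]
    rfl

lemma classifyDotAux_congr {c : C} {ξ ξ' : ∀ g : Over c, X.obj (op g.left)}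
    (h : ∀ g, ξ g = ξ' g) {pt : ∀ g, fib f (ξ g)} {pt' : ∀ g, fib f (ξ' g)}
    (hp : ∀ g, (pt g).1 = (pt' g).1) {h1 : ∀ g, Cardinal.mk (fib f (ξ g)) < α}
    {h2 : ∀ {g g' : Over c} (m : g ⟶ g'), X.map m.left.op (ξ g') = ξ g}
    {h3 : ∀ {g g' : Over c} (m : g ⟶ g'), Y.map m.left.op (pt g').1 = (pt g).1}
    {h1' : ∀ g, Cardinal.mk (fib f (ξ' g)) < α}
    {h2' : ∀ {g g' : Over c} (m : g ⟶ g'), X.map m.left.op (ξ' g') = ξ' g}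
    {h3' : ∀ {g g' : Over c} (m : g ⟶ g'), Y.map m.left.op (pt' g').1 = (pt' g).1} :
    classifyDotAux f ξ pt h1 h2 h3 = classifyDotAux f ξ' pt' h1' h2' h3' := by
  obtain rfl : ξ = ξ' := funext h
  obtain rfl : pt = pt' := funext fun g => Subtype.ext (hp g)
  rfl

end Aux

section Aux2

variable {C : Type u} [SmallCategory C] {Y X : Cᵒᵖ ⥤ Type u} {α : Cardinal.{u}}
variable (f : Y ⟶ X) (hf : AlphaSmall α f)

lemma classifySmall_eq_aux {c : C} (x : X.obj (op c)) :
    classifySmall f hf x = classifyAux f (fun g => X.map g.hom.op x) (fun _ => hf _ _)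
      (fun {g g'} m => by
        rw [← types_comp_apply (X.map g'.hom.op) (X.map m.left.op), ← X.map_comp, ← op_comp,
          Over.w m]) := rfl

lemma comp_classifySmall_eq_aux {c c' : C} (k : c' ⟶ c) (x : X.obj (op c)) :
    Over.map k ⋙ classifySmall f hf x =
      classifyAux f (fun g : Over c' => X.map (g.hom ≫ k).op x) (fun _ => hf _ _)
        (fun {g g'} m => by
          rw [← types_comp_apply (X.map (g'.hom ≫ k).op) (X.map m.left.op), ← X.map_comp,
            ← op_comp]
          congr 2
          rw [← Category.assoc, Over.w m]) := rfl

lemma classifyDotSmall_eq_aux {c : C} (y : Y.obj (op c)) :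
    classifyDotSmall f hf y = classifyDotAux f
      (fun g => X.map g.hom.op (f.app (op c) y))
      (fun g => ⟨Y.map g.hom.op y, by rw [FunctorToTypes.naturality]⟩)
      (fun _ => hf _ _)
      (fun {g g'} m => by
        rw [← types_comp_apply (X.map g'.hom.op) (X.map m.left.op), ← X.map_comp, ← op_comp,
          Over.w m])
      (fun {g g'} m => by
        change Y.map m.left.op (Y.map g'.hom.op y) = Y.map g.hom.op y
        rw [← types_comp_apply (Y.map g'.hom.op) (Y.map m.left.op), ← Y.map_comp, ← op_comp,
          Over.w m]) := rfl

lemma comp_classifyDotSmall_eq_aux {c c' : C} (k : c' ⟶ c) (y : Y.obj (op c)) :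
    Over.map k ⋙ classifyDotSmall f hf y = classifyDotAux f
      (fun g : Over c' => X.map (g.hom ≫ k).op (f.app (op c) y))
      (fun g => ⟨Y.map (g.hom ≫ k).op y, by rw [FunctorToTypes.naturality]⟩)
      (fun _ => hf _ _)
      (fun {g g'} m => by
        rw [← types_comp_apply (X.map (g'.hom ≫ k).op) (X.map m.left.op), ← X.map_comp,
          ← op_comp]
        congr 2
        rw [← Category.assoc, Over.w m])
      (fun {g g'} m => by
        change Y.map m.left.op (Y.map (g'.hom ≫ k).op y) = Y.map (g.hom ≫ k).op y
        rw [← types_comp_apply (Y.map (g'.hom ≫ k).op) (Y.map m.left.op), ← Y.map_comp,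
          ← op_comp]
        congr 2
        rw [← Category.assoc, Over.w m]) := rfl

end Aux2

section Aux3

variable {C : Type u} [SmallCategory C] {Y X : Cᵒᵖ ⥤ Type u} {α : Cardinal.{u}}
variable (f : Y ⟶ X) (hf : AlphaSmall α f)

lemma classifySmall_nat {c c' : C} (k : c' ⟶ c) (x : X.obj (op c)) :
    Over.map k ⋙ classifySmall f hf x = classifySmall f hf (X.map k.op x) := by
  rw [comp_classifySmall_eq_aux, classifySmall_eq_aux]
  exact classifyAux_congr f (fun g => by rw [op_comp, X.map_comp]; rfl)

lemma classifyDotSmall_nat {c c' : C} (k : c' ⟶ c) (y : Y.obj (op c)) :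
    Over.map k ⋙ classifyDotSmall f hf y = classifyDotSmall f hf (Y.map k.op y) := by
  rw [comp_classifyDotSmall_eq_aux, classifyDotSmall_eq_aux]
  refine classifyDotAux_congr f (fun g => ?_) (fun g => ?_)
  · change X.map (g.hom ≫ k).op (f.app (op c) y) = X.map g.hom.op (f.app (op c') (Y.map k.op y))
    rw [FunctorToTypes.naturality, op_comp, X.map_comp]
    rfl
  · change Y.map (g.hom ≫ k).op y = Y.map g.hom.op (Y.map k.op y)
    rw [op_comp, Y.map_comp]
    rfl

/-- Extract value equality from a `HEq` between fiber elements over equal base points. -/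
lemma fib_val_of_heq {d : C} {x x' : X.obj (op d)} (h : x = x') {a : fib f x} {b : fib f x'}
    (hab : HEq a b) : a.1 = b.1 := by
  subst h
  rw [eq_of_heq hab]

/-- Build a `HEq` between fiber elements over equal base points from value equality. -/
lemma fib_heq_of_val {d : C} {x x' : X.obj (op d)} (h : x = x') {a : fib f x} {b : fib f x'}
    (hab : a.1 = b.1) : HEq a b := by
  subst h
  rw [Subtype.ext hab]

end Aux3

section Aux4

variable {C : Type u} [SmallCategory C] {Y X : Cᵒᵖ ⥤ Type u} {α : Cardinal.{u}}

lemma unop_eqToHom_set {A B : (SmallSet α)ᵒᵖ} (h : A = B) (hT : B.unop.obj = A.unop.obj)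
    (z : B.unop.obj) : (eqToHom h).unop.hom z = cast hT z := by
  subst h
  exact (eq_of_heq (cast_heq hT z)).symm

lemma unop_eqToHom_toFun {A B : (SmallPointed α)ᵒᵖ} (h : A = B)
    (hT : B.unop.obj.X = A.unop.obj.X) (z : B.unop.obj.X) :
    ((eqToHom h).unop).hom.toFun z = cast hT z := by
  subst h
  exact (eq_of_heq (cast_heq hT z)).symm

lemma pointed_point_heq {A B : Pointed.{u}} (h : A = B) : HEq A.point B.point := by
  subst h
  rfl

lemma smallPointedOp_ext {A B : SmallPointed α} (h1 : A.obj.X = B.obj.X)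
    (h2 : HEq A.obj.point B.obj.point) : (op A : (SmallPointed α)ᵒᵖ) = op B := by
  obtain ⟨⟨TA, pA⟩, hA⟩ := A
  obtain ⟨⟨TB, pB⟩, hB⟩ := B
  cases h1
  cases h2
  rfl

variable (f : Y ⟶ X) (hf : AlphaSmall α f)

lemma key {c : C} (P : Over c ⥤ (SmallPointed α)ᵒᵖ) (y : Y.obj (op c))
    (hP : P ⋙ (smallForget α).op = classifySmall f hf (f.app (op c) y))
    (hpt : HEq ((P.obj (Over.mk (𝟙 c))).unop.obj.point)
      ((⟨y, rfl⟩ : fib f (f.app (op c) y)))) :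
    P = classifyDotSmall f hf y := by
  have e : ∀ g : Over c, (P.obj g).unop.obj.X = fib f (X.map g.hom.op (f.app (op c) y)) :=
    fun g => congrArg (fun S : (SmallSet α)ᵒᵖ => S.unop.obj) (Functor.congr_obj hP g)
  have mapval : ∀ {g g' : Over c} (m : g ⟶ g') (z : (P.obj g').unop.obj.X),
      (P.map m).unop.hom.toFun z
        = cast (e g).symm
            (((classifySmall f hf (f.app (op c) y)).map m).unop.hom (cast (e g') z)) := by
    intro g g' m z
    have hm := Functor.congr_hom hP m
    have hz : (P.map m).unop.hom.toFun z =
        (eqToHom (Functor.congr_obj hP g) ≫ (classifySmall f hf (f.app (op c) y)).map m ≫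
          eqToHom (Functor.congr_obj hP g').symm).unop.hom z :=
      congrArg (fun k => k.unop.hom z) hm
    rw [hz]
    change (eqToHom (Functor.congr_obj hP g)).unop.hom
      (((classifySmall f hf (f.app (op c) y)).map m).unop.hom
        ((eqToHom (Functor.congr_obj hP g').symm).unop.hom z)) = _
    rw [unop_eqToHom_set (Functor.congr_obj hP g').symm (e g') z,
      unop_eqToHom_set (Functor.congr_obj hP g) (e g).symm]
    rfl
  have hy1 : (cast (e (Over.mk (𝟙 c))) ((P.obj (Over.mk (𝟙 c))).unop.obj.point)).1 = y := by
    refine fib_val_of_heq f ?_ (HEq.trans (cast_heq _ _) hpt)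
    change X.map (𝟙 c).op (f.app (op c) y) = f.app (op c) y
    rw [show (𝟙 c).op = 𝟙 (op c) from rfl, X.map_id]
    rfl
  have hobj : ∀ g : Over c, P.obj g = (classifyDotSmall f hf y).obj g := by
    intro g
    have hval : (cast (e g) ((P.obj g).unop.obj.point)).1 = Y.map g.hom.op y := by
      have h1 : (P.obj g).unop.obj.point =
          (P.map (Over.homMk g.hom : g ⟶ Over.mk (𝟙 c))).unop.hom.toFun
            ((P.obj (Over.mk (𝟙 c))).unop.obj.point) :=
        ((P.map (Over.homMk g.hom : g ⟶ Over.mk (𝟙 c))).unop.hom.map_point).symm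
      have h2 : ∀ w : fib f (X.map g.hom.op (f.app (op c) y)),
          cast (e g) (cast (e g).symm w) = w := fun w => by
        rw [cast_cast]
        exact eq_of_heq (cast_heq _ _)
      rw [h1, mapval (Over.homMk g.hom : g ⟶ Over.mk (𝟙 c)) _]
      exact (congrArg Subtype.val (h2 _)).trans (congrArg (Y.map g.hom.op) hy1)
    exact smallPointedOp_ext (e g)
      (HEq.trans (cast_heq (e g) _).symm (heq_of_eq (Subtype.ext hval)))
  refine CategoryTheory.Functor.ext hobj (fun g g' m => ?_)
  apply Quiver.Hom.unop_inj
  apply ObjectProperty.hom_ext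
  apply Pointed.Hom.ext
  funext z
  change (P.map m).unop.hom.toFun z =
    (eqToHom (hobj g)).unop.hom.toFun
      ((((classifyDotSmall f hf y).map m).unop).hom.toFun ((eqToHom (hobj g').symm).unop.hom.toFun z))
  rw [mapval m z, unop_eqToHom_toFun (hobj g').symm (e g') z,
    unop_eqToHom_toFun (hobj g) (e g).symm]
  rfl

end Aux4

/-- For every `α`-small morphism of presheaves `f : Y ⟶ X` on a small
category `C` there is a pullback square in presheaves (valued one universe higher) with
left map `f`, right map the forgetful map `𝒱̇_α ⟶ 𝒱_α`, bottom map sending `x ∈ X(c)` to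
the functor `(g : d ⟶ c) ↦ f_d⁻¹{X(g)(x)}`, and top map sending `y ∈ Y(c)` to the functor
`(g : d ⟶ c) ↦ (f_d⁻¹{X(g)(f_c(y))}, Y(g)(y))`. -/
theorem alphaSmall_isPullback (C : Type u) [SmallCategory C] (α : Cardinal.{u})
    {Y X : Cᵒᵖ ⥤ Type u} (f : Y ⟶ X) (hf : AlphaSmall α f) :
    ∃ (top : Y ⋙ uliftFunctor.{u + 1} ⟶ Vdot C α) (bot : X ⋙ uliftFunctor.{u + 1} ⟶ V C α),
      (∀ (c : C) (y : Y.obj (op c)), top.app (op c) ⟨y⟩ = classifyDotSmall f hf y) ∧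
      (∀ (c : C) (x : X.obj (op c)), bot.app (op c) ⟨x⟩ = classifySmall f hf x) ∧
      IsPullback top (Functor.whiskerRight f uliftFunctor.{u + 1}) (VdotToV C α) bot := by
  classical
  let top : Y ⋙ uliftFunctor.{u + 1} ⟶ Vdot C α :=
    ⟨fun c => TypeCat.ofHom fun yl => classifyDotSmall f hf yl.down, fun {c c'} h => by
      ext yl; exact (classifyDotSmall_nat f hf h.unop yl.down).symm⟩
  let bot : X ⋙ uliftFunctor.{u + 1} ⟶ V C α :=
    ⟨fun c => TypeCat.ofHom fun xl => classifySmall f hf xl.down, fun {c c'} h => by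
      ext xl; exact (classifySmall_nat f hf h.unop xl.down).symm⟩
  have sq : CommSq top (Functor.whiskerRight f uliftFunctor.{u + 1}) (VdotToV C α) bot := ⟨rfl⟩
  refine ⟨top, bot, fun c y => rfl, fun c x => rfl, IsPullback.of_isLimit' sq ?_⟩
  apply evaluationJointlyReflectsLimits
  intro c
  refine (isLimitMapConePullbackConeEquiv ((evaluation Cᵒᵖ (Type (u + 1))).obj c) sq.w).symm ?_
  refine (PullbackCone.isLimitEquivBijective _).symm ⟨?_, ?_⟩
  · rintro ⟨a⟩ ⟨b⟩ hab
    have h1 : classifyDotSmall f hf a = classifyDotSmall f hf b :=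
      congrArg (fun w => w.1.1) hab
    have h2 : f.app (op c.unop) a = f.app (op c.unop) b :=
      congrArg (fun w => w.1.2.down) hab
    have hobj := Functor.congr_obj h1 (Over.mk (𝟙 c.unop))
    have hpts := pointed_point_heq (congrArg (fun S : (SmallPointed α)ᵒᵖ => S.unop.obj) hobj)
    have hv := fib_val_of_heq f (congrArg (X.map (𝟙 c.unop).op) h2) hpts
    have hab' : a = b := by
      have ha : Y.map (𝟙 c.unop).op a = a := by
        rw [show (𝟙 c.unop).op = 𝟙 (op c.unop) from rfl, Y.map_id]
        rfl
      have hb : Y.map (𝟙 c.unop).op b = b := by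
        rw [show (𝟙 c.unop).op = 𝟙 (op c.unop) from rfl, Y.map_id]
        rfl
      rw [← ha, ← hb]
      exact hv
    rw [hab']
  · rintro ⟨⟨P, ⟨x⟩⟩, hc⟩
    have hP : P ⋙ (smallForget α).op = classifySmall f hf x := hc
    have e1 : (P.obj (Over.mk (𝟙 c.unop))).unop.obj.X
        = fib f (X.map (Over.mk (𝟙 c.unop)).hom.op x) :=
      congrArg (fun S : (SmallSet α)ᵒᵖ => S.unop.obj)
        (Functor.congr_obj hP (Over.mk (𝟙 c.unop)))
    set z := cast e1 (P.obj (Over.mk (𝟙 c.unop))).unop.obj.point with hz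
    have hx : f.app (op c.unop) z.1 = x := by
      refine z.2.trans ?_
      change X.map (𝟙 c.unop).op x = x
      rw [show (𝟙 c.unop).op = 𝟙 (op c.unop) from rfl, X.map_id]
      rfl
    have hP' : P ⋙ (smallForget α).op = classifySmall f hf (f.app (op c.unop) z.1) := by
      rw [hx]
      exact hP
    have hpt' : HEq ((P.obj (Over.mk (𝟙 c.unop))).unop.obj.point)
        ((⟨z.1, rfl⟩ : fib f (f.app (op c.unop) z.1))) :=
      HEq.trans (cast_heq e1 _).symm (fib_heq_of_val f z.2.symm rfl)
    have hkey : P = classifyDotSmall f hf z.1 := key f hf P z.1 hP' hpt'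
    refine ⟨⟨z.1⟩, ?_⟩
    apply Subtype.ext
    exact Prod.ext hkey.symm (congrArg ULift.up hx)


end HS
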